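/- Fix natural numbers ℓ, m, p, q with 2 ≤ ℓ, ℓ < m, 1 ≤ p, p < q; set n := p*(ℓ−1) + q*(m−1) + 2 and let r := (ℓ : ℝ) + m + (2 − p − q)/q. Define N(L) := Nat.card {(a,b) : ℤ × ℤ | (|a| : ℝ) ≤ L^ℓ ∧ (|b| : ℝ) ≤ L^m ∧ ((|a|^p * |b|^q : ℤ) : ℝ) ≤ L^n}. Then there exist real constants c > 0 and C > 0 such that for every real L ≥ 2, c * L^r ≤ N(L) ≤ C * L^r, where L^r denotes Real.rpow L r. -/

import Mathlib

open Finset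
set_option maxHeartbeats 1000000

lemma aux_bern {β x : ℝ} (hβ0 : 0 < β) (hβ1 : β ≤ 1) (hx : 1 ≤ x) :
    β * x ^ (β - 1) + (x - 1) ^ β ≤ x ^ β := by
  have hx0 : (0:ℝ) < x := lt_of_lt_of_le one_pos hx
  have hs : (-1:ℝ) ≤ -(1/x) := by
    have : 1/x ≤ 1 := div_le_one_of_le₀ hx hx0.le
    linarith
  have hber := rpow_one_add_le_one_add_mul_self hs hβ0.le hβ1
  have h1 : (1:ℝ) + -(1/x) = (x-1)/x := by field_simp; ring
  rw [h1] at hber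
  have h2 : ((x-1)/x) ^ β = (x-1)^β / x^β := Real.div_rpow (by linarith) hx0.le β
  rw [h2] at hber
  have hxβ : (0:ℝ) < x ^ β := Real.rpow_pos_of_pos hx0 β
  have h3 : (x-1)^β ≤ (1 + β * -(1/x)) * x ^ β := by
    calc (x-1)^β = ((x-1)^β / x^β) * x^β := by field_simp
    _ ≤ (1 + β * -(1/x)) * x ^ β := by nlinarith [hber]
  have h4 : (1 + β * -(1/x)) * x ^ β = x ^ β - β * (x^β / x) := by field_simp; ring
  have h5 : x ^ (β - 1) = x ^ β / x := Real.rpow_sub_one hx0.ne' β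
  rw [h5]; linarith [h3, h4.le]

lemma aux_sum {β : ℝ} (hβ0 : 0 < β) (hβ1 : β ≤ 1) (A : ℤ) (hA : 0 ≤ A) :
    ∑ a ∈ Finset.Icc (1:ℤ) A, ((a:ℝ)) ^ (β - 1) ≤ (A:ℝ) ^ β / β := by
  refine Int.le_induction (motive := fun A _ => ∑ a ∈ Finset.Icc (1:ℤ) A, ((a:ℝ)) ^ (β - 1) ≤ (A:ℝ) ^ β / β) ?_ ?_ A hA
  · simp [Real.zero_rpow hβ0.ne']
  · intro A hA ih
    have hni : (A+1) ∉ Finset.Icc (1:ℤ) A := by simp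
    have hins : Finset.Icc (1:ℤ) (A+1) = insert (A+1) (Finset.Icc 1 A) := by
      ext x; simp only [Finset.mem_Icc, Finset.mem_insert]; omega
    rw [hins, Finset.sum_insert hni]
    have hx : (1:ℝ) ≤ ((A:ℝ)+1) := by
      have : (0:ℝ) ≤ (A:ℝ) := by exact_mod_cast hA
      linarith
    have hb := aux_bern hβ0 hβ1 hx
    have he : ((A:ℝ)+1-1) = (A:ℝ) := by ring
    rw [he] at hb
    push_cast
    calc ((A:ℝ)+1)^(β-1) + ∑ a ∈ Finset.Icc (1:ℤ) A, ((a:ℝ)) ^ (β - 1)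
        ≤ ((A:ℝ)+1)^(β-1) + (A:ℝ)^β/β := by linarith
      _ = (β*((A:ℝ)+1)^(β-1) + (A:ℝ)^β)/β := by field_simp
      _ ≤ ((A:ℝ)+1)^β/β := by
          rw [div_le_div_iff₀ hβ0 hβ0]; nlinarith [hb]

/-- With `n = p(ℓ-1) + q(m-1) + 2` and `r = ℓ + m + (2-p-q)/q`, the number of integer
pairs `(a,b)` with `|a| ≤ L^ℓ`, `|b| ≤ L^m`, `|a|^p |b|^q ≤ L^n` is `Θ(L^r)` for `L ≥ 2`. -/
theorem stmt_7 (ℓ m p q : ℕ) (hℓ : 2 ≤ ℓ) (hlm : ℓ < m) (hp : 1 ≤ p) (hpq : p < q)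
    (n : ℕ) (hn : n = p * (ℓ - 1) + q * (m - 1) + 2)
    (r : ℝ) (hr : r = (ℓ : ℝ) + (m : ℝ) + (2 - (p : ℝ) - (q : ℝ)) / (q : ℝ)) :
    ∃ c C : ℝ, 0 < c ∧ 0 < C ∧ ∀ L : ℝ, 2 ≤ L →
      c * L ^ r ≤
        (Nat.card {ab : ℤ × ℤ | (|ab.1| : ℝ) ≤ L ^ ℓ ∧ (|ab.2| : ℝ) ≤ L ^ m ∧
          ((|ab.1| ^ p * |ab.2| ^ q : ℤ) : ℝ) ≤ L ^ n} : ℝ) ∧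
      (Nat.card {ab : ℤ × ℤ | (|ab.1| : ℝ) ≤ L ^ ℓ ∧ (|ab.2| : ℝ) ≤ L ^ m ∧
          ((|ab.1| ^ p * |ab.2| ^ q : ℤ) : ℝ) ≤ L ^ n} : ℝ) ≤ C * L ^ r := by
  -- basic real casts
  have hq2 : 2 ≤ q := by omega
  have hm3 : 3 ≤ m := by omega
  have hqR : (0:ℝ) < q := by positivity
  have hpR : (1:ℝ) ≤ p := by exact_mod_cast hp
  have hpqR : (p:ℝ) + 1 ≤ q := by exact_mod_cast hpq
  have hℓR : (2:ℝ) ≤ ℓ := by exact_mod_cast hℓ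
  have hmR : (ℓ:ℝ) + 1 ≤ m := by exact_mod_cast hlm
  have hnr : (n:ℝ) = (p:ℝ)*(ℓ:ℝ) - p + (q:ℝ)*(m:ℝ) - q + 2 := by
    subst hn
    have h1 : (1:ℕ) ≤ ℓ := by omega
    have h2 : (1:ℕ) ≤ m := by omega
    push_cast [h1, h2]; ring
  set β : ℝ := 1 - (p:ℝ)/(q:ℝ) with hβ
  have hβ0 : 0 < β := by
    have : (p:ℝ)/q < 1 := (div_lt_one hqR).mpr (by linarith)
    simp only [hβ]; linarith
  have hβ1 : β ≤ 1 := by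
    have : 0 ≤ (p:ℝ)/q := by positivity
    simp only [hβ]; linarith
  set D : ℝ := (2 - (p:ℝ) - (q:ℝ)) / (q:ℝ) with hD
  have hd1 : -2 ≤ D := by
    rw [hD, le_div_iff₀ hqR]; nlinarith
  have hd2 : D ≤ 0 := by
    apply div_nonpos_of_nonpos_of_nonneg <;> linarith
  have hr0 : 0 ≤ r := by rw [hr]; linarith
  have hℓr : (ℓ:ℝ) ≤ r := by rw [hr]; linarith
  have hmr : (m:ℝ) ≤ r := by rw [hr]; linarith
  have hexp : (n:ℝ) * ((q:ℝ)⁻¹) + (ℓ:ℝ) * β = r := by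
    rw [hr, hnr, hβ, hD]; field_simp; ring
  set e : ℝ := ((n:ℝ) - (p:ℝ)*(ℓ:ℝ))/(q:ℝ) with hE
  have he0 : 0 ≤ e := by
    rw [hE]; apply div_nonneg _ hqR.le; nlinarith
  have hem : e ≤ (m:ℝ) := by
    rw [hE, div_le_iff₀ hqR]; nlinarith
  have hre : (ℓ:ℝ) + e = r := by
    rw [hr, hE, hD]; field_simp; rw [hnr]; ring
  have heq : e * q = (n:ℝ) - (p:ℝ)*(ℓ:ℝ) := by
    rw [hE]; field_simp
  refine ⟨1, 5 + 4/β, one_pos, by positivity, ?_⟩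
  intro L hL
  have hL0 : (0:ℝ) < L := by linarith
  have hL1 : (1:ℝ) ≤ L := by linarith
  set S : Set (ℤ × ℤ) := {ab : ℤ × ℤ | (|ab.1| : ℝ) ≤ L ^ ℓ ∧ (|ab.2| : ℝ) ≤ L ^ m ∧
          ((|ab.1| ^ p * |ab.2| ^ q : ℤ) : ℝ) ≤ L ^ n} with hS
  -- basic powers
  have hLℓ1 : (1:ℝ) ≤ L ^ ℓ := one_le_pow₀ hL1
  have hLe1 : (1:ℝ) ≤ L ^ e := Real.one_le_rpow hL1 he0
  have hLr1 : (1:ℝ) ≤ L ^ r := Real.one_le_rpow hL1 hr0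
  have hLℓr : L ^ ℓ ≤ L ^ r := by
    rw [← Real.rpow_natCast L ℓ]
    exact Real.rpow_le_rpow_of_exponent_le hL1 hℓr
  have hLmr : L ^ m ≤ L ^ r := by
    rw [← Real.rpow_natCast L m]
    exact Real.rpow_le_rpow_of_exponent_le hL1 hmr
  set A : ℤ := ⌊L ^ ℓ⌋ with hA
  have hA0 : 0 ≤ A := Int.floor_nonneg.mpr (by linarith)
  have hAle : (A:ℝ) ≤ L ^ ℓ := Int.floor_le _
  have hAge : L ^ ℓ - 1 < (A:ℝ) := Int.sub_one_lt_floor _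
  set B : ℤ := ⌊L ^ e⌋ with hB
  have hB0 : 0 ≤ B := Int.floor_nonneg.mpr (by linarith)
  have hBle : (B:ℝ) ≤ L ^ e := Int.floor_le _
  have hBge : L ^ e - 1 < (B:ℝ) := Int.sub_one_lt_floor _
  -- lower bound candidate set
  set G : Finset (ℤ × ℤ) := Finset.Icc (-A) A ×ˢ Finset.Icc (-B) B with hG
  have hGS : ↑G ⊆ S := by
    rintro ⟨a, b⟩ hab
    simp only [hG, Finset.coe_product, Set.mem_prod, Finset.coe_Icc, Set.mem_Icc] at hab
    obtain ⟨⟨ha1, ha2⟩, hb1, hb2⟩ := hab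
    have haA : |a| ≤ A := abs_le.mpr ⟨ha1, ha2⟩
    have hbB : |b| ≤ B := abs_le.mpr ⟨hb1, hb2⟩
    have haR : ((|a| : ℤ) : ℝ) ≤ L ^ ℓ := le_trans (by exact_mod_cast haA) hAle
    have hbR : ((|b| : ℤ) : ℝ) ≤ L ^ e := le_trans (by exact_mod_cast hbB) hBle
    rw [Int.cast_abs] at haR hbR
    refine ⟨haR, le_trans hbR ?_, ?_⟩
    · calc L ^ e ≤ L ^ (m:ℝ) := Real.rpow_le_rpow_of_exponent_le hL1 hem
        _ = L ^ m := Real.rpow_natCast L m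
    · push_cast
      have h1 : |(a:ℝ)| ^ p ≤ (L ^ ℓ) ^ p := pow_le_pow_left₀ (abs_nonneg _) haR p
      have h2 : |(b:ℝ)| ^ q ≤ (L ^ e) ^ q := pow_le_pow_left₀ (abs_nonneg _) hbR q
      calc |(a:ℝ)| ^ p * |(b:ℝ)| ^ q ≤ (L ^ ℓ) ^ p * (L ^ e) ^ q :=
            mul_le_mul h1 h2 (by positivity) (by positivity)
        _ = L ^ n := by
            rw [← pow_mul, ← Real.rpow_natCast L (ℓ * p), ← Real.rpow_natCast (L ^ e) q,
              ← Real.rpow_mul hL0.le, ← Real.rpow_add hL0, heq, ← Real.rpow_natCast L n]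
            congr 1
            push_cast
            ring
  have hGcard : L ^ r ≤ (G.card : ℝ) := by
    have h1 : (Finset.Icc (-A) A).card = (2*A+1).toNat := by
      rw [Int.card_Icc]; congr 1; ring
    have h2 : (Finset.Icc (-B) B).card = (2*B+1).toNat := by
      rw [Int.card_Icc]; congr 1; ring
    have e1 : (((2*A+1).toNat : ℕ) : ℝ) = 2*(A:ℝ)+1 := by
      have h := Int.toNat_of_nonneg (by omega : (0:ℤ) ≤ 2*A+1)
      exact_mod_cast congrArg (fun z : ℤ => (z:ℝ)) h
    have e2 : (((2*B+1).toNat : ℕ) : ℝ) = 2*(B:ℝ)+1 := by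
      have h := Int.toNat_of_nonneg (by omega : (0:ℤ) ≤ 2*B+1)
      exact_mod_cast congrArg (fun z : ℤ => (z:ℝ)) h
    have hc : (G.card : ℝ) = (2*(A:ℝ)+1) * (2*(B:ℝ)+1) := by
      rw [hG, Finset.card_product, h1, h2, Nat.cast_mul, e1, e2]
    rw [hc]
    have hA' : L ^ ℓ ≤ 2*(A:ℝ)+1 := by linarith
    have hB' : L ^ e ≤ 2*(B:ℝ)+1 := by linarith
    calc L ^ r = L ^ ((ℓ:ℝ) + e) := by rw [hre]
      _ = L ^ ((ℓ:ℝ)) * L ^ e := Real.rpow_add hL0 _ _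
      _ = L ^ ℓ * L ^ e := by rw [Real.rpow_natCast]
      _ ≤ (2*(A:ℝ)+1) * (2*(B:ℝ)+1) :=
          mul_le_mul hA' hB' (by positivity) (by linarith)

  -- upper bound
  set g : ℤ → ℝ := fun a => if a = 0 then L ^ m else (L ^ n / |(a:ℝ)| ^ p) ^ ((q:ℝ)⁻¹) with hg
  have hg0 : ∀ a : ℤ, 0 ≤ g a := by
    intro a
    simp only [hg]
    split
    · positivity
    · exact Real.rpow_nonneg (div_nonneg (by positivity) (by positivity)) _
  set Ba : ℤ → ℤ := fun a => ⌊g a⌋ with hBa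
  have hBa0 : ∀ a, 0 ≤ Ba a := fun a => Int.floor_nonneg.mpr (hg0 a)
  have hBale : ∀ a, ((Ba a : ℤ) : ℝ) ≤ g a := fun a => Int.floor_le _
  set F : Finset (ℤ × ℤ) := (Finset.Icc (-A) A).biUnion
      (fun a => ({a} : Finset ℤ) ×ˢ Finset.Icc (-(Ba a)) (Ba a)) with hF
  have hSF : S ⊆ ↑F := by
    rintro ⟨a, b⟩ hab
    rw [hS] at hab
    obtain ⟨h1, h2, h3⟩ := hab
    have haA : a ∈ Finset.Icc (-A) A := by
      rw [Finset.mem_Icc]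
      have habs : |a| ≤ A := Int.le_floor.mpr (by rw [Int.cast_abs]; exact h1)
      constructor <;> [skip; skip] <;> cases abs_le.mp habs with | intro u v => first | exact u | exact v
    have hbg : ((|b| : ℤ) : ℝ) ≤ g a := by
      simp only [hg]
      split
      case isTrue => rw [Int.cast_abs]; exact h2
      case isFalse ha =>
        have ha1 : (1:ℝ) ≤ |(a:ℝ)| := by
          have hz : (1:ℤ) ≤ |a| := by
            rcases lt_trichotomy a 0 with h|h|h
            · calc (1:ℤ) ≤ -a := by omega
                _ ≤ |a| := by rw [abs_of_neg h]
            · exact absurd h ha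
            · calc (1:ℤ) ≤ a := by omega
                _ ≤ |a| := le_abs_self a
          calc (1:ℝ) ≤ ((|a| : ℤ) : ℝ) := by exact_mod_cast hz
            _ = |(a:ℝ)| := Int.cast_abs
        have hap : (0:ℝ) < |(a:ℝ)| ^ p := by positivity
        have h3' : |(a:ℝ)| ^ p * |(b:ℝ)| ^ q ≤ L ^ n := by
          have := h3; push_cast at this; exact this
        have hbq : |(b:ℝ)| ^ q ≤ L ^ n / |(a:ℝ)| ^ p := by
          rw [le_div_iff₀ hap, mul_comm]; exact h3'
        have hmono := Real.rpow_le_rpow (by positivity) hbq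
          (by positivity : (0:ℝ) ≤ ((q:ℝ))⁻¹)
        rw [Real.pow_rpow_inv_natCast (abs_nonneg _) (by omega : q ≠ 0)] at hmono
        rw [Int.cast_abs]; exact hmono
    have hbB : |b| ≤ Ba a := Int.le_floor.mpr hbg
    refine Finset.mem_coe.mpr (Finset.mem_biUnion.mpr ⟨a, haA, ?_⟩)
    rw [Finset.mem_product, Finset.mem_singleton, Finset.mem_Icc]
    obtain ⟨hb1, hb2⟩ := abs_le.mp hbB
    exact ⟨rfl, hb1, hb2⟩
  have hSfin : S.Finite := Set.Finite.subset F.finite_toSet hSF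
  have hGN : (G.card : ℝ) ≤ (Nat.card S : ℝ) := by
    have h := Nat.card_mono hSfin hGS
    rw [Nat.card_coe_set_eq, Set.ncard_coe_finset] at h
    exact_mod_cast h
  have hNF : (Nat.card S : ℝ) ≤ (F.card : ℝ) := by
    have h := Nat.card_mono F.finite_toSet hSF
    rw [Nat.card_coe_set_eq, Nat.card_coe_set_eq, Set.ncard_coe_finset] at h
    rw [Nat.card_coe_set_eq]
    exact_mod_cast h
  have hFsum : (F.card : ℝ) ≤ ∑ a ∈ Finset.Icc (-A) A, (2 * g a + 1) := by
    calc (F.card : ℝ)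
        ≤ ((∑ a ∈ Finset.Icc (-A) A,
            (({a} : Finset ℤ) ×ˢ Finset.Icc (-(Ba a)) (Ba a)).card : ℕ) : ℝ) := by
          exact_mod_cast Finset.card_biUnion_le
      _ = ∑ a ∈ Finset.Icc (-A) A,
            (((({a} : Finset ℤ) ×ˢ Finset.Icc (-(Ba a)) (Ba a)).card : ℕ) : ℝ) := by
          push_cast; rfl
      _ ≤ ∑ a ∈ Finset.Icc (-A) A, (2 * g a + 1) := by
          apply Finset.sum_le_sum
          intro a _
          rw [Finset.card_product, Finset.card_singleton, one_mul, Int.card_Icc]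
          have h0 : (0:ℤ) ≤ Ba a := hBa0 a
          have heq2 : Ba a + 1 - -(Ba a) = 2 * Ba a + 1 := by ring
          rw [heq2]
          have hpos := Int.toNat_of_nonneg (by omega : (0:ℤ) ≤ 2 * Ba a + 1)
          have hcast : (((2 * Ba a + 1).toNat : ℕ) : ℝ) = 2 * ((Ba a : ℤ) : ℝ) + 1 := by
            exact_mod_cast congrArg (fun z : ℤ => (z:ℝ)) hpos
          rw [hcast]
          have := hBale a
          linarith
  have hsplit : ∑ a ∈ Finset.Icc (-A) A, (2 * g a + 1)
      = (((Finset.Icc (-A) A).card : ℕ) : ℝ) + 2 * ∑ a ∈ Finset.Icc (-A) A, g a := by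
    rw [Finset.sum_add_distrib, Finset.sum_const, nsmul_eq_mul, mul_one, ← Finset.mul_sum,
      add_comm]
  have hunion : Finset.Icc (-A) A = Finset.Icc (-A) (-1) ∪ Finset.Icc 0 A := by
    ext x; simp only [Finset.mem_Icc, Finset.mem_union]; omega
  have hdisj : Disjoint (Finset.Icc (-A) (-1)) (Finset.Icc (0:ℤ) A) := by
    rw [Finset.disjoint_left]
    intro x hx hx'
    rw [Finset.mem_Icc] at hx hx'
    omega
  have himg : Finset.Icc (-A) (-1) = Finset.image (fun x : ℤ => -x) (Finset.Icc 1 A) := by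
    ext x
    simp only [Finset.mem_Icc, Finset.mem_image]
    constructor
    · intro hx; exact ⟨-x, ⟨by omega, by omega⟩, by ring⟩
    · rintro ⟨y, ⟨hy1, hy2⟩, rfl⟩; omega
  have hgneg : ∀ a : ℤ, g (-a) = g a := by
    intro a
    by_cases h : a = 0
    · simp [h]
    · have h' : ¬(-a = 0) := by omega
      simp only [hg, if_neg h, if_neg h', Int.cast_neg, abs_neg]
  have hsumneg : ∑ a ∈ Finset.Icc (-A) (-1), g a = ∑ a ∈ Finset.Icc 1 A, g a := by
    rw [himg, Finset.sum_image (by intro x _ y _ hxy; simp only [neg_inj] at hxy; omega)]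
    exact Finset.sum_congr rfl fun a _ => hgneg a
  have hzero : Finset.Icc (0:ℤ) A = insert 0 (Finset.Icc 1 A) := by
    ext x; simp only [Finset.mem_Icc, Finset.mem_insert]; omega
  have h0ni : (0:ℤ) ∉ Finset.Icc (1:ℤ) A := by simp
  have hg0val : g 0 = L ^ m := by simp [hg]
  set K : ℝ := (L ^ n) ^ ((q:ℝ)⁻¹) with hK
  have hK0 : 0 ≤ K := Real.rpow_nonneg (by positivity) _
  have hgpos : ∀ a ∈ Finset.Icc (1:ℤ) A, g a = K * (a:ℝ) ^ (β - 1) := by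
    intro a ha
    rw [Finset.mem_Icc] at ha
    have ha0 : a ≠ 0 := by omega
    have haR : (0:ℝ) < (a:ℝ) := by exact_mod_cast (by omega : (0:ℤ) < a)
    simp only [hg, if_neg ha0]
    rw [abs_of_pos haR, Real.div_rpow (by positivity) (by positivity),
      ← Real.rpow_natCast_mul haR.le p ((q:ℝ)⁻¹), div_eq_mul_inv, ← Real.rpow_neg haR.le]
    rw [hK]
    congr 1
    rw [hβ, div_eq_mul_inv]
    ring
  have hsum1 : ∑ a ∈ Finset.Icc (1:ℤ) A, g a ≤ K * ((A:ℝ) ^ β / β) := by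
    rw [Finset.sum_congr rfl hgpos, ← Finset.mul_sum]
    exact mul_le_mul_of_nonneg_left (aux_sum hβ0 hβ1 A hA0) hK0
  have hcardIcc : (((Finset.Icc (-A) A).card : ℕ) : ℝ) = 2*(A:ℝ)+1 := by
    rw [Int.card_Icc]
    have hpos := Int.toNat_of_nonneg (by omega : (0:ℤ) ≤ A + 1 - -A)
    calc ((A + 1 - -A).toNat : ℝ) = ((A + 1 - -A : ℤ) : ℝ) := by
          exact_mod_cast congrArg (fun z : ℤ => (z:ℝ)) hpos
      _ = 2*(A:ℝ)+1 := by push_cast; ring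
  have hKb : K * (A:ℝ) ^ β ≤ L ^ r := by
    have h1 : (A:ℝ) ^ β ≤ (L ^ ℓ) ^ β :=
      Real.rpow_le_rpow (by exact_mod_cast hA0) hAle hβ0.le
    calc K * (A:ℝ)^β ≤ K * (L^ℓ)^β := mul_le_mul_of_nonneg_left h1 hK0
      _ = L ^ ((n:ℝ) * ((q:ℝ))⁻¹) * L ^ ((ℓ:ℝ) * β) := by
          rw [hK, ← Real.rpow_natCast_mul hL0.le, ← Real.rpow_natCast_mul hL0.le]
      _ = L ^ r := by rw [← Real.rpow_add hL0, hexp]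
  have hsum : ∑ a ∈ Finset.Icc (-A) A, g a = g 0 + 2 * ∑ a ∈ Finset.Icc 1 A, g a := by
    rw [hunion, Finset.sum_union hdisj, hsumneg, hzero, Finset.sum_insert h0ni]; ring
  have hfinal : (Nat.card S : ℝ) ≤ (5 + 4/β) * L ^ r := by
    have hstep : (Nat.card S : ℝ)
        ≤ (2*(A:ℝ)+1) + 2 * (g 0 + 2 * ∑ a ∈ Finset.Icc 1 A, g a) := by
      calc (Nat.card S : ℝ) ≤ (F.card : ℝ) := hNF
        _ ≤ ∑ a ∈ Finset.Icc (-A) A, (2 * g a + 1) := hFsum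
        _ = (2*(A:ℝ)+1) + 2 * (g 0 + 2 * ∑ a ∈ Finset.Icc 1 A, g a) := by
            rw [hsplit, hsum, hcardIcc]
    have hfb : 4 * (K * ((A:ℝ)^β/β)) = (4/β) * (K * (A:ℝ)^β) := by
      field_simp
    have h4 : (4/β) * (K * (A:ℝ)^β) ≤ (4/β) * L ^ r :=
      mul_le_mul_of_nonneg_left hKb (by positivity)
    rw [hg0val] at hstep
    have hgoal : (5 + 4/β) * L ^ r = 5 * L ^ r + (4/β) * L ^ r := by ring
    rw [hgoal]
    linarith [hstep, hsum1, hfb, h4, hAle, hLℓr, hLmr, hLr1]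
  constructor
  · rw [one_mul]
    calc L ^ r ≤ (G.card : ℝ) := hGcard
      _ ≤ (Nat.card S : ℝ) := hGN
  · exact hfinal
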